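/- arXiv:2311.10192 — 3 statements merged into one kernel-verified Lean document; each statement's English description precedes it below -/
import Mathlib

section
/- Let x : ℝ → ℝ² be a three times continuously differentiable, 2π-periodic parametrization with |x′(s)| > 0 for all s, and for σ ≠ s (σ near s) define h₂(s,σ) = −(x′(s) · x′(σ)) / (|x′(s)| r(s,σ)) + ((x(s) − x(σ)) · x′(σ)) ((x(s) − x(σ)) · x′(s)) / (|x′(s)| r(s,σ)³). Then for every s ∈ ℝ, h₂(s,σ) tends to 0 as σ tends to s with σ ≠ s. -/
open Real Filter

lemma seg_abs {s σ τ : ℝ} (h : τ ∈ segment ℝ s σ) : |τ - s| ≤ |σ - s| := by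
  obtain ⟨u, v, hu, hv, huv, rfl⟩ := h
  have hu1 : u = 1 - v := by linarith
  subst hu1
  have he : (1 - v) • s + v • σ - s = v * (σ - s) := by simp [smul_eq_mul]; ring
  rw [he, abs_mul, abs_of_nonneg hv]
  nlinarith [abs_nonneg (σ - s)]

lemma aux_bigO2 {F : ℝ → ℝ} {s : ℝ} (hF : Differentiable ℝ F) (h0 : F s = 0)
    (hdF : DifferentiableAt ℝ (deriv F) s) (h1 : deriv F s = 0) :
    ∃ C, 0 ≤ C ∧ ∀ᶠ σ in nhds s, |F σ| ≤ C * (σ - s) ^ 2 := by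
  have hO : (fun σ => deriv F σ) =O[nhds s] (fun σ => σ - s) := by
    simpa [h1] using hdF.isBigO_sub
  obtain ⟨C, hC0, hC⟩ := hO.exists_nonneg
  have hev : ∀ᶠ σ in nhds s, |deriv F σ| ≤ C * |σ - s| := by
    simpa [Real.norm_eq_abs] using hC.bound
  obtain ⟨δ, hδ, hball⟩ := Metric.eventually_nhds_iff.mp hev
  refine ⟨C, hC0, Metric.eventually_nhds_iff.mpr ⟨δ, hδ, ?_⟩⟩
  intro σ hσ
  rw [Real.dist_eq] at hσ
  have key := (convex_segment s σ).norm_image_sub_le_of_norm_hasDerivWithin_le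
    (f' := deriv F) (fun τ _ => (hF τ).hasDerivAt.hasDerivWithinAt)
    (C := C * |σ - s|)
    (fun τ hτ => by
      have h1' : |τ - s| ≤ |σ - s| := seg_abs hτ
      have h2 : dist τ s < δ := by rw [Real.dist_eq]; exact lt_of_le_of_lt h1' hσ
      calc ‖deriv F τ‖ = |deriv F τ| := rfl
        _ ≤ C * |τ - s| := hball h2
        _ ≤ C * |σ - s| := by nlinarith)
    (left_mem_segment ℝ s σ) (right_mem_segment ℝ s σ)
  rw [h0, sub_zero, Real.norm_eq_abs, Real.norm_eq_abs] at key
  calc |F σ| ≤ C * |σ - s| * |σ - s| := key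
    _ = C * (σ - s) ^ 2 := by rw [mul_assoc, ← sq_abs (σ - s)]; ring

/-- For a `C³`, `2π`-periodic regular parametrization `x : ℝ → ℝ²`,
the function
`h₂(s,σ) = −(x′(s)·x′(σ))/(|x′(s)| r(s,σ)) + ((x(s)−x(σ))·x′(σ))((x(s)−x(σ))·x′(s))/(|x′(s)| r(s,σ)³)`
tends to `0` as `σ → s`, `σ ≠ s`. -/
theorem stmt_1 (x : ℝ → EuclideanSpace ℝ (Fin 2))
    (hx : ContDiff ℝ 3 x)
    (hper : Function.Periodic x (2 * Real.pi))
    (hreg : ∀ s : ℝ, ‖deriv x s‖ > 0) (s : ℝ) :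
    Tendsto (fun σ : ℝ =>
        -((inner ℝ (deriv x s) (deriv x σ) : ℝ)) / (‖deriv x s‖ * ‖x s - x σ‖) +
          ((inner ℝ (x s - x σ) (deriv x σ) : ℝ) * (inner ℝ (x s - x σ) (deriv x s) : ℝ)) /
            (‖deriv x s‖ * ‖x s - x σ‖ ^ 3))
      (nhdsWithin s {s}ᶜ) (nhds 0) := by
  have hc : 0 < ‖deriv x s‖ := hreg s
  have hc' : ‖deriv x s‖ ≠ 0 := ne_of_gt hc
  have hxd : Differentiable ℝ x := hx.differentiable (by norm_num)
  have hx' : ContDiff ℝ 2 (deriv x) := by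
    have := (contDiff_succ_iff_deriv.mp (show ContDiff ℝ ((2:ℕ)+1) x from hx)).2.2
    exact_mod_cast this
  have hxd' : Differentiable ℝ (deriv x) := hx'.differentiable (by norm_num)
  have hx'' : ContDiff ℝ 1 (deriv (deriv x)) := by
    have := (contDiff_succ_iff_deriv.mp (show ContDiff ℝ ((1:ℕ)+1) (deriv x) from by
      exact_mod_cast hx')).2.2
    exact_mod_cast this
  have hxd'' : Differentiable ℝ (deriv (deriv x)) := hx''.differentiable (by norm_num)
  set p : ℝ → ℝ := fun τ => x τ 0 with hpdef
  set q : ℝ → ℝ := fun τ => x τ 1 with hqdef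
  set dp : ℝ → ℝ := fun τ => deriv x τ 0 with hdpdef
  set dq : ℝ → ℝ := fun τ => deriv x τ 1 with hdqdef
  set ddp : ℝ → ℝ := fun τ => deriv (deriv x) τ 0 with hddpdef
  set ddq : ℝ → ℝ := fun τ => deriv (deriv x) τ 1 with hddqdef
  have hp' : ∀ τ, HasDerivAt p (dp τ) τ := fun τ => by
    exact (EuclideanSpace.proj (0 : Fin 2)).hasFDerivAt.comp_hasDerivAt τ (hxd τ).hasDerivAt
  have hq' : ∀ τ, HasDerivAt q (dq τ) τ := fun τ => by
    exact (EuclideanSpace.proj (1 : Fin 2)).hasFDerivAt.comp_hasDerivAt τ (hxd τ).hasDerivAt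
  have hdp' : ∀ τ, HasDerivAt dp (ddp τ) τ := fun τ => by
    exact (EuclideanSpace.proj (0 : Fin 2)).hasFDerivAt.comp_hasDerivAt τ (hxd' τ).hasDerivAt
  have hdq' : ∀ τ, HasDerivAt dq (ddq τ) τ := fun τ => by
    exact (EuclideanSpace.proj (1 : Fin 2)).hasFDerivAt.comp_hasDerivAt τ (hxd' τ).hasDerivAt
  have hddp' : ∀ τ, HasDerivAt ddp (deriv (deriv (deriv x)) τ 0) τ := fun τ => by
    exact
      (EuclideanSpace.proj (0 : Fin 2)).hasFDerivAt.comp_hasDerivAt τ (hxd'' τ).hasDerivAt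
  have hddq' : ∀ τ, HasDerivAt ddq (deriv (deriv (deriv x)) τ 1) τ := fun τ => by
    exact
      (EuclideanSpace.proj (1 : Fin 2)).hasFDerivAt.comp_hasDerivAt τ (hxd'' τ).hasDerivAt
  set f : ℝ → ℝ := fun σ => (p s - p σ) * dq s - (q s - q σ) * dp s with hfdef
  set g : ℝ → ℝ := fun σ => (p s - p σ) * dq σ - (q s - q σ) * dp σ with hgdef
  -- derivative of f
  have hF' : ∀ σ, HasDerivAt f (-dp σ * dq s - -dq σ * dp s) σ := fun σ =>
    (((hp' σ).const_sub (p s)).mul_const (dq s)).sub (((hq' σ).const_sub (q s)).mul_const (dp s))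
  have derivF : deriv f = fun σ => -dp σ * dq s - -dq σ * dp s := funext fun σ => (hF' σ).deriv
  have hf0 : f s = 0 := by simp [hfdef]
  have hdf0 : deriv f s = 0 := by rw [derivF]; ring
  have hFdiff : Differentiable ℝ f := fun σ => (hF' σ).differentiableAt
  have hdFdiff : DifferentiableAt ℝ (deriv f) s := by
    rw [derivF]
    exact (((hdp' s).differentiableAt.neg.mul_const _).sub
      ((hdq' s).differentiableAt.neg.mul_const _))
  obtain ⟨C1, hC10, hC1⟩ := aux_bigO2 hFdiff hf0 hdFdiff hdf0
  -- derivative of g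
  have hG' : ∀ σ, HasDerivAt g
      ((-dp σ * dq σ + (p s - p σ) * ddq σ) - (-dq σ * dp σ + (q s - q σ) * ddp σ)) σ := fun σ =>
    (((hp' σ).const_sub (p s)).mul (hdq' σ)).sub (((hq' σ).const_sub (q s)).mul (hdp' σ))
  have derivG : deriv g =
      fun σ => (-dp σ * dq σ + (p s - p σ) * ddq σ) - (-dq σ * dp σ + (q s - q σ) * ddp σ) :=
    funext fun σ => (hG' σ).deriv
  have hg0 : g s = 0 := by simp [hgdef]
  have hdg0 : deriv g s = 0 := by rw [derivG]; ring
  have hGdiff : Differentiable ℝ g := fun σ => (hG' σ).differentiableAt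
  have hdGdiff : DifferentiableAt ℝ (deriv g) s := by
    rw [derivG]
    exact ((((hdp' s).differentiableAt.neg.mul (hdq' s).differentiableAt).add
        (((hp' s).differentiableAt.const_sub _).mul (hddq' s).differentiableAt)).sub
      (((hdq' s).differentiableAt.neg.mul (hdp' s).differentiableAt).add
        (((hq' s).differentiableAt.const_sub _).mul (hddp' s).differentiableAt)))
  obtain ⟨C2, hC20, hC2⟩ := aux_bigO2 hGdiff hg0 hdGdiff hdg0
  -- lower bound on ‖x s - x σ‖
  have hlo : ∀ᶠ σ in nhds s, ‖deriv x s‖ / 2 * |σ - s| ≤ ‖x s - x σ‖ := by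
    have h := (hasDerivAt_iff_isLittleO.mp (hxd s).hasDerivAt).def (half_pos hc)
    filter_upwards [h] with σ hσ
    rw [Real.norm_eq_abs] at hσ
    have h1 : ‖(σ - s) • deriv x s‖ ≤ ‖x σ - x s‖ + ‖x σ - x s - (σ - s) • deriv x s‖ := by
      calc ‖(σ - s) • deriv x s‖
          = ‖(x σ - x s) - (x σ - x s - (σ - s) • deriv x s)‖ := by rw [sub_sub_cancel]
        _ ≤ _ := norm_sub_le _ _
    have h2 : ‖(σ - s) • deriv x s‖ = |σ - s| * ‖deriv x s‖ := by
      rw [norm_smul, Real.norm_eq_abs]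
    rw [norm_sub_rev]
    nlinarith [norm_nonneg (x σ - x s)]
  -- inner product / norm component formulas
  have hInner : ∀ u w : EuclideanSpace ℝ (Fin 2), (inner ℝ u w : ℝ) = u 0 * w 0 + u 1 * w 1 :=
    fun u w => by
      simp [PiLp.inner_apply, Fin.sum_univ_two, RCLike.inner_apply, conj_trivial]; ring
  have hNorm2 : ∀ u : EuclideanSpace ℝ (Fin 2), ‖u‖ ^ 2 = u 0 ^ 2 + u 1 ^ 2 := fun u => by
    rw [← real_inner_self_eq_norm_sq, hInner]; ring
  -- conclude by squeezing
  refine squeeze_zero_norm' (a := fun σ => 8 * C1 * C2 / ‖deriv x s‖ ^ 4 * |σ - s|) ?_ ?_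
  · filter_upwards [hC1.filter_mono nhdsWithin_le_nhds, hC2.filter_mono nhdsWithin_le_nhds,
      hlo.filter_mono nhdsWithin_le_nhds, self_mem_nhdsWithin] with σ h1 h2 h3 hne
    have hus : σ ≠ s := hne
    have habs : 0 < |σ - s| := abs_pos.mpr (sub_ne_zero.mpr hus)
    have hr : 0 < ‖x s - x σ‖ := lt_of_lt_of_le (by positivity) h3
    have hr' : ‖x s - x σ‖ ≠ 0 := ne_of_gt hr
    have hr2 : ‖x s - x σ‖ ^ 2 = (p s - p σ) ^ 2 + (q s - q σ) ^ 2 := by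
      rw [hNorm2]; simp [hpdef, hqdef]
    have hA : (inner ℝ (deriv x s) (deriv x σ) : ℝ) = dp s * dp σ + dq s * dq σ := by
      rw [hInner]
    have hB : (inner ℝ (x s - x σ) (deriv x σ) : ℝ) =
        (p s - p σ) * dp σ + (q s - q σ) * dq σ := by
      rw [hInner]; simp [hpdef, hqdef, hdpdef, hdqdef]
    have hCc : (inner ℝ (x s - x σ) (deriv x s) : ℝ) =
        (p s - p σ) * dp s + (q s - q σ) * dq s := by
      rw [hInner]; simp [hpdef, hqdef, hdpdef, hdqdef]
    have h4 : ((p s - p σ) * dp σ + (q s - q σ) * dq σ) *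
          ((p s - p σ) * dp s + (q s - q σ) * dq s) -
          (dp s * dp σ + dq s * dq σ) * ‖x s - x σ‖ ^ 2 = -(f σ * g σ) := by
      rw [hr2, hfdef, hgdef]; ring
    have hkey : -((inner ℝ (deriv x s) (deriv x σ) : ℝ)) / (‖deriv x s‖ * ‖x s - x σ‖) +
          ((inner ℝ (x s - x σ) (deriv x σ) : ℝ) * (inner ℝ (x s - x σ) (deriv x s) : ℝ)) /
            (‖deriv x s‖ * ‖x s - x σ‖ ^ 3) =
        -(f σ * g σ) / (‖deriv x s‖ * ‖x s - x σ‖ ^ 3) := by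
      rw [hA, hB, hCc, ← h4]
      field_simp
      ring
    have hfinal : |(-((inner ℝ (deriv x s) (deriv x σ) : ℝ)) / (‖deriv x s‖ * ‖x s - x σ‖) +
          ((inner ℝ (x s - x σ) (deriv x σ) : ℝ) * (inner ℝ (x s - x σ) (deriv x s) : ℝ)) /
            (‖deriv x s‖ * ‖x s - x σ‖ ^ 3))| ≤
        8 * C1 * C2 / ‖deriv x s‖ ^ 4 * |σ - s| := by
      rw [hkey, abs_div, abs_neg,
        abs_of_pos (show (0:ℝ) < ‖deriv x s‖ * ‖x s - x σ‖ ^ 3 by positivity)]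
      calc |f σ * g σ| / (‖deriv x s‖ * ‖x s - x σ‖ ^ 3)
          ≤ (C1 * (σ - s) ^ 2 * (C2 * (σ - s) ^ 2)) /
              (‖deriv x s‖ * (‖deriv x s‖ / 2 * |σ - s|) ^ 3) := by
            apply div_le_div₀ (by positivity) ?_ (by positivity) ?_
            · rw [abs_mul]
              exact mul_le_mul h1 h2 (abs_nonneg _) (by positivity)
            · exact mul_le_mul_of_nonneg_left (pow_le_pow_left₀ (by positivity) h3 3) hc.le
        _ = 8 * C1 * C2 / ‖deriv x s‖ ^ 4 * |σ - s| := by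
            have e1 : C1 * (σ - s) ^ 2 * (C2 * (σ - s) ^ 2) = C1 * C2 * |σ - s| ^ 4 := by
              rw [← sq_abs (σ - s)]; ring
            rw [e1]
            set t : ℝ := |σ - s| with htdef
            have ht : t ≠ 0 := ne_of_gt habs
            field_simp
            ring
    exact hfinal
  · have h : Tendsto (fun σ : ℝ => 8 * C1 * C2 / ‖deriv x s‖ ^ 4 * |σ - s|) (nhds s)
        (nhds (8 * C1 * C2 / ‖deriv x s‖ ^ 4 * |s - s|)) :=
      (continuous_const.mul ((continuous_id.sub continuous_const).abs)).tendsto s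
    have h' := h.mono_left (nhdsWithin_le_nhds (s := {s}ᶜ))
    simpa using h'
end

section
/- Let κ > 0 and let f : [0,∞) → ℝ be continuously differentiable with f(0) = 0, and suppose there exist constants A ≥ 0 and a < κ with |f(t)| ≤ A e^{a t} and |f′(t)| ≤ A e^{a t} for all t ≥ 0. Then for every n ≥ 0, the n-th Laguerre coefficient of f′ satisfies ∫₀^∞ e^{−κ t} L_n(κ t) f′(t) dt = κ Σ_{m=0}^{n} f_m, where f_m = ∫₀^∞ e^{−κ t} L_m(κ t) f(t) dt. -/
open Real MeasureTheory

/-- The Laguerre polynomial `L_n(t) = Σ_{k=0}^n (n choose k) (−t)^k / k!`. -/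
noncomputable def laguerre (n : ℕ) (t : ℝ) : ℝ :=
  ∑ k ∈ Finset.range (n + 1), (n.choose k : ℝ) * (-t) ^ k / (Nat.factorial k : ℝ)

lemma laguerre_succ (n : ℕ) (t : ℝ) :
    laguerre (n + 1) t = laguerre n t +
      ∑ j ∈ Finset.range (n + 1), (n.choose j : ℝ) * (-t) ^ (j + 1) / (Nat.factorial (j + 1) : ℝ) := by
  unfold laguerre
  rw [Finset.sum_range_succ' (fun k => ((n+1).choose k : ℝ) * (-t) ^ k / (Nat.factorial k : ℝ))]
  have h1 : ∀ i ∈ Finset.range (n + 1),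
      ((n+1).choose (i+1) : ℝ) * (-t) ^ (i+1) / (Nat.factorial (i+1) : ℝ)
        = (n.choose (i+1) : ℝ) * (-t) ^ (i+1) / (Nat.factorial (i+1) : ℝ)
          + (n.choose i : ℝ) * (-t) ^ (i+1) / (Nat.factorial (i+1) : ℝ) := by
    intro i _
    rw [Nat.choose_succ_succ']
    push_cast
    ring
  rw [Finset.sum_congr rfl h1, Finset.sum_add_distrib]
  have h2 : (∑ k ∈ Finset.range (n + 1), (n.choose k : ℝ) * (-t) ^ k / (Nat.factorial k : ℝ))
      = (∑ i ∈ Finset.range n, (n.choose (i+1) : ℝ) * (-t) ^ (i+1) / (Nat.factorial (i+1) : ℝ))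
        + (n.choose 0 : ℝ) * (-t) ^ 0 / (Nat.factorial 0 : ℝ) :=
    Finset.sum_range_succ' _ n
  have h3 : (∑ i ∈ Finset.range (n+1), (n.choose (i+1) : ℝ) * (-t) ^ (i+1) / (Nat.factorial (i+1) : ℝ))
      = ∑ i ∈ Finset.range n, (n.choose (i+1) : ℝ) * (-t) ^ (i+1) / (Nat.factorial (i+1) : ℝ) := by
    rw [Finset.sum_range_succ, Nat.choose_eq_zero_of_lt (by omega)]
    simp
  rw [h3, h2]
  simp
  ring

lemma hasDerivAt_laguerre (n : ℕ) (t : ℝ) :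
    HasDerivAt (laguerre n) (-(∑ m ∈ Finset.range n, laguerre m t)) t := by
  induction n with
  | zero =>
    have h : laguerre 0 = fun _ => (1 : ℝ) := by
      funext s; simp [laguerre]
    rw [h]
    simpa using hasDerivAt_const t (1:ℝ)
  | succ n ih =>
    have hR : HasDerivAt (fun s => ∑ j ∈ Finset.range (n + 1),
        (n.choose j : ℝ) * (-s) ^ (j + 1) / (Nat.factorial (j + 1) : ℝ)) (-(laguerre n t)) t := by
      have : HasDerivAt (fun s => ∑ j ∈ Finset.range (n + 1),
          (n.choose j : ℝ) * (-s) ^ (j + 1) / (Nat.factorial (j + 1) : ℝ))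
          (∑ j ∈ Finset.range (n + 1),
            (n.choose j : ℝ) * (((j:ℝ)+1) * (-t) ^ j * (-1)) / (Nat.factorial (j + 1) : ℝ)) t := by
      
        apply HasDerivAt.fun_sum
        intro j _
        have hneg : HasDerivAt (fun s : ℝ => -s) (-1) t := (hasDerivAt_id t).neg
        have hpow : HasDerivAt (fun s : ℝ => (-s) ^ (j+1))
            (((j:ℝ)+1) * (-t) ^ j * (-1)) t := by
          have := hneg.fun_pow (j+1)
          simpa using this
        simpa [mul_div_assoc] using (hpow.const_mul ((n.choose j : ℝ))).div_const (Nat.factorial (j + 1) : ℝ)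
      convert this using 1
      unfold laguerre
      rw [← Finset.sum_neg_distrib]
      apply Finset.sum_congr rfl
      intro j _
      have hfac : (Nat.factorial (j+1) : ℝ) = ((j:ℝ)+1) * (Nat.factorial j : ℝ) := by
        rw [Nat.factorial_succ]; push_cast; ring
      rw [hfac]
      have hj : ((j:ℝ)+1) ≠ 0 := by positivity
      field_simp
    have h : laguerre (n+1) = fun s => laguerre n s + ∑ j ∈ Finset.range (n + 1),
        (n.choose j : ℝ) * (-s) ^ (j + 1) / (Nat.factorial (j + 1) : ℝ) :=
      funext fun s => laguerre_succ n s
    rw [h]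
    have := ih.add hR
    refine this.congr_deriv ?_
    rw [Finset.sum_range_succ]
    ring

lemma continuous_laguerre (n : ℕ) : Continuous (laguerre n) := by
  unfold laguerre
  exact continuous_finset_sum _ fun k _ =>
    Continuous.div_const (continuous_const.mul ((continuous_pow k).comp continuous_neg)) _

lemma laguerre_bound (n : ℕ) (κ ε : ℝ) (hε : 0 < ε) :
    ∃ C : ℝ, 0 ≤ C ∧ ∀ t : ℝ, 0 ≤ t → |laguerre n (κ * t)| ≤ C * Real.exp (ε * t) := by
  refine ⟨∑ k ∈ Finset.range (n + 1), (n.choose k : ℝ) * (|κ| / ε) ^ k,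
    Finset.sum_nonneg fun k _ => by positivity, fun t ht => ?_⟩
  calc |laguerre n (κ * t)|
      ≤ ∑ k ∈ Finset.range (n + 1), |(n.choose k : ℝ) * (-(κ * t)) ^ k / (Nat.factorial k : ℝ)| :=
        Finset.abs_sum_le_sum_abs _ _
    _ ≤ ∑ k ∈ Finset.range (n + 1), (n.choose k : ℝ) * (|κ| / ε) ^ k * Real.exp (ε * t) := by
        apply Finset.sum_le_sum
        intro k _
        have h1 : |(n.choose k : ℝ) * (-(κ * t)) ^ k / (Nat.factorial k : ℝ)|
            = (n.choose k : ℝ) * ((|κ| * t) ^ k / (Nat.factorial k : ℝ)) := by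
          rw [abs_div, abs_mul, abs_pow, abs_neg, abs_mul, abs_of_nonneg ht, mul_div_assoc]
          simp [Nat.abs_cast]
        have h2 : (ε * t) ^ k / (Nat.factorial k : ℝ) ≤ Real.exp (ε * t) :=
          Real.pow_div_factorial_le_exp _ (by positivity) k
        have h3 : (|κ| * t) ^ k / (Nat.factorial k : ℝ)
            = (|κ| / ε) ^ k * ((ε * t) ^ k / (Nat.factorial k : ℝ)) := by
          field_simp
          rw [← mul_pow]; congr 1; field_simp
        calc |(n.choose k : ℝ) * (-(κ * t)) ^ k / (Nat.factorial k : ℝ)|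
            = (n.choose k : ℝ) * ((|κ| / ε) ^ k * ((ε * t) ^ k / (Nat.factorial k : ℝ))) := by
              rw [h1, h3]
          _ ≤ (n.choose k : ℝ) * ((|κ| / ε) ^ k * Real.exp (ε * t)) := by gcongr
          _ = (n.choose k : ℝ) * (|κ| / ε) ^ k * Real.exp (ε * t) := by ring
    _ = (∑ k ∈ Finset.range (n + 1), (n.choose k : ℝ) * (|κ| / ε) ^ k) * Real.exp (ε * t) := by
        rw [Finset.sum_mul]

lemma key_bound (κ a A : ℝ) (g : ℝ → ℝ) (m : ℕ) (C ε : ℝ) (hC0 : 0 ≤ C)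
    (hC : ∀ t : ℝ, 0 ≤ t → |laguerre m (κ * t)| ≤ C * Real.exp (ε * t))
    (hgb : ∀ t : ℝ, 0 ≤ t → |g t| ≤ A * Real.exp (a * t))
    (hεdef : ε = (κ - a) / 2) (t : ℝ) (ht0 : 0 ≤ t) :
    |Real.exp (-κ * t) * laguerre m (κ * t) * g t| ≤ C * A * Real.exp (-ε * t) := by
  calc |Real.exp (-κ * t) * laguerre m (κ * t) * g t|
      = |Real.exp (-κ * t)| * |laguerre m (κ * t)| * |g t| := by rw [abs_mul, abs_mul]
    _ ≤ Real.exp (-κ * t) * (C * Real.exp (ε * t)) * (A * Real.exp (a * t)) := by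
        rw [abs_exp]
        gcongr <;> first
          | exact hC t ht0
          | exact hgb t ht0
          | exact mul_nonneg hC0 (Real.exp_pos _).le
          | positivity
    _ = C * A * Real.exp (-κ * t + ε * t + a * t) := by rw [Real.exp_add, Real.exp_add]; ring
    _ = C * A * Real.exp (-ε * t) := by congr 2; rw [hεdef]; ring

lemma key_integrable (κ a A : ℝ) (hκ : 0 < κ) (ha : a < κ) (hA : 0 ≤ A)
    (g : ℝ → ℝ) (hg : Continuous g) (hgb : ∀ t : ℝ, 0 ≤ t → |g t| ≤ A * Real.exp (a * t))
    (m : ℕ) :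
    IntegrableOn (fun t => Real.exp (-κ * t) * laguerre m (κ * t) * g t) (Set.Ioi (0:ℝ)) := by
  set ε := (κ - a) / 2 with hεdef
  have hε : 0 < ε := by simp only [hεdef]; linarith
  obtain ⟨C, hC0, hC⟩ := laguerre_bound m κ ε hε
  have hint : IntegrableOn (fun t => C * A * Real.exp (-ε * t)) (Set.Ioi (0:ℝ)) := by
    simpa [neg_mul, mul_assoc, IntegrableOn] using (exp_neg_integrableOn_Ioi 0 hε).const_mul (C * A)
  apply hint.mono' ((((Real.continuous_exp.comp (continuous_const.mul continuous_id)).mul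
    ((continuous_laguerre m).comp (continuous_const.mul continuous_id))).mul hg).aestronglyMeasurable)
  filter_upwards [ae_restrict_mem measurableSet_Ioi] with t ht
  rw [Real.norm_eq_abs]
  exact key_bound κ a A g m C ε hC0 hC hgb hεdef t (le_of_lt ht)

lemma key_tendsto (κ a A : ℝ) (hκ : 0 < κ) (ha : a < κ) (hA : 0 ≤ A)
    (g : ℝ → ℝ) (hgb : ∀ t : ℝ, 0 ≤ t → |g t| ≤ A * Real.exp (a * t)) (m : ℕ) :
    Filter.Tendsto (fun t => Real.exp (-κ * t) * laguerre m (κ * t) * g t) Filter.atTop (nhds 0) := by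
  set ε := (κ - a) / 2 with hεdef
  have hε : 0 < ε := by simp only [hεdef]; linarith
  obtain ⟨C, hC0, hC⟩ := laguerre_bound m κ ε hε
  have hlim : Filter.Tendsto (fun t => C * A * Real.exp (-ε * t)) Filter.atTop (nhds 0) := by
    have h2 : Filter.Tendsto (fun t : ℝ => Real.exp (-(ε * t))) Filter.atTop (nhds 0) :=
      Real.tendsto_exp_neg_atTop_nhds_zero.comp (Filter.tendsto_id.const_mul_atTop hε)
    simpa [neg_mul] using (h2.const_mul (C * A))
  apply squeeze_zero_norm' _ hlim
  filter_upwards [Filter.eventually_ge_atTop (0:ℝ)] with t ht0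
  rw [Real.norm_eq_abs]
  exact key_bound κ a A g m C ε hC0 hC hgb hεdef t ht0

/-- For `κ > 0` and `f` continuously differentiable with `f(0) = 0`,
`|f(t)| ≤ A e^{a t}` and `|f′(t)| ≤ A e^{a t}` on `[0,∞)` for some `A ≥ 0`, `a < κ`,
the `n`-th Laguerre coefficient of `f′` equals `κ Σ_{m=0}^n f_m`. -/
theorem stmt_2 (κ : ℝ) (hκ : 0 < κ) (f : ℝ → ℝ)
    (hf : ContDiff ℝ 1 f) (hf0 : f 0 = 0)
    (A a : ℝ) (hA : 0 ≤ A) (ha : a < κ)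
    (hfb : ∀ t : ℝ, 0 ≤ t → |f t| ≤ A * Real.exp (a * t))
    (hfb' : ∀ t : ℝ, 0 ≤ t → |deriv f t| ≤ A * Real.exp (a * t))
    (n : ℕ) :
    ∫ t in Set.Ioi (0 : ℝ), Real.exp (-κ * t) * laguerre n (κ * t) * deriv f t =
      κ * ∑ m ∈ Finset.range (n + 1),
        ∫ t in Set.Ioi (0 : ℝ), Real.exp (-κ * t) * laguerre m (κ * t) * f t := by
  have hfd : Differentiable ℝ f := hf.differentiable one_ne_zero
  have hfc' : Continuous (deriv f) := hf.continuous_deriv le_rfl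
  set g : ℝ → ℝ := fun t => Real.exp (-κ * t) * laguerre n (κ * t) * f t with hgdef
  set Afun : ℝ → ℝ := fun t => Real.exp (-κ * t) * laguerre n (κ * t) * deriv f t with hAdef
  set Bfun : ℝ → ℝ := fun t =>
    κ * (Real.exp (-κ * t) * (∑ m ∈ Finset.range (n + 1), laguerre m (κ * t)) * f t) with hBdef
  have hgderiv : ∀ t : ℝ, HasDerivAt g (Afun t - Bfun t) t := by
    intro t
    have h1 : HasDerivAt (fun t : ℝ => -κ * t) (-κ) t := by
      simpa using (hasDerivAt_id t).const_mul (-κ)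
    have he : HasDerivAt (fun t : ℝ => Real.exp (-κ * t)) (Real.exp (-κ * t) * -κ) t :=
      (Real.hasDerivAt_exp (-κ * t)).comp t h1
    have h2 : HasDerivAt (fun t : ℝ => κ * t) κ t := by
      simpa using (hasDerivAt_id t).const_mul κ
    have hL : HasDerivAt (fun t : ℝ => laguerre n (κ * t))
        (-(∑ m ∈ Finset.range n, laguerre m (κ * t)) * κ) t :=
      (hasDerivAt_laguerre n (κ * t)).comp t h2
    have hF : HasDerivAt f (deriv f t) t := (hfd t).hasDerivAt
    have := (he.mul hL).mul hF
    refine this.congr_deriv ?_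
    simp only [hAdef, hBdef]
    rw [Finset.sum_range_succ, Pi.mul_apply]
    ring
  have hIA : IntegrableOn Afun (Set.Ioi (0:ℝ)) :=
    key_integrable κ a A hκ ha hA (deriv f) hfc' hfb' n
  have hIm : ∀ m : ℕ, IntegrableOn
      (fun t => Real.exp (-κ * t) * laguerre m (κ * t) * f t) (Set.Ioi (0:ℝ)) :=
    fun m => key_integrable κ a A hκ ha hA f hf.continuous hfb m
  have hBeq : Bfun = fun t => ∑ m ∈ Finset.range (n + 1),
      κ * (Real.exp (-κ * t) * laguerre m (κ * t) * f t) := by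
    funext t
    simp only [hBdef]
    rw [Finset.mul_sum, Finset.sum_mul, Finset.mul_sum]
  have hIB : IntegrableOn Bfun (Set.Ioi (0:ℝ)) := by
    rw [hBeq]
    exact integrable_finset_sum _ fun m _ => (hIm m).const_mul κ
  have hg0 : g 0 = 0 := by simp [hgdef, hf0]
  have hgcont : ContinuousWithinAt g (Set.Ici (0:ℝ)) 0 := by
    apply Continuous.continuousWithinAt
    exact ((Real.continuous_exp.comp (continuous_const.mul continuous_id)).mul
      ((continuous_laguerre n).comp (continuous_const.mul continuous_id))).mul hf.continuous
  have hgtop : Filter.Tendsto g Filter.atTop (nhds 0) :=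
    key_tendsto κ a A hκ ha hA f hfb n
  have hFTC : ∫ t in Set.Ioi (0:ℝ), (Afun t - Bfun t) = 0 - g 0 :=
    integral_Ioi_of_hasDerivAt_of_tendsto hgcont (fun x _ => hgderiv x)
      (hIA.sub hIB) hgtop
  rw [integral_sub hIA hIB, hg0, sub_zero] at hFTC
  have hAB : ∫ t in Set.Ioi (0:ℝ), Afun t = ∫ t in Set.Ioi (0:ℝ), Bfun t := by linarith
  calc ∫ t in Set.Ioi (0:ℝ), Afun t = ∫ t in Set.Ioi (0:ℝ), Bfun t := hAB
    _ = ∑ m ∈ Finset.range (n + 1),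
        ∫ t in Set.Ioi (0:ℝ), κ * (Real.exp (-κ * t) * laguerre m (κ * t) * f t) := by
        rw [hBeq]
        exact integral_finset_sum _ fun m _ => (hIm m).const_mul κ
    _ = κ * ∑ m ∈ Finset.range (n + 1),
        ∫ t in Set.Ioi (0:ℝ), Real.exp (-κ * t) * laguerre m (κ * t) * f t := by
        rw [Finset.mul_sum]
        exact Finset.sum_congr rfl fun m _ => MeasureTheory.integral_const_mul κ _
end

section
/- For every n ≥ 0, the function Φ_n is differentiable on (0,∞) and Φ_n′(r) = K₀(γr) ṽ_n(r) + K₁(γr) w̃_n(r) for all r > 0, where ṽ_n(r) = 2 Σ_{k=1}^{⌊n/2⌋} k a_{n,2k} r^{2k−1} − γ w_n(r) and w̃_n(r) = 2 Σ_{k=1}^{⌊(n−1)/2⌋} k a_{n,2k+1} r^{2k} − γ v_n(r). -/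
open Real Filter

/-- `I₀(z) = Σ_{n=0}^∞ (z/2)^{2n}/(n!)²`. -/
noncomputable def besselI0 (z : ℝ) : ℝ :=
  ∑' n : ℕ, (z / 2) ^ (2 * n) / (Nat.factorial n : ℝ) ^ 2

/-- `I₁(z) = Σ_{n=0}^∞ (z/2)^{2n+1}/(n!(n+1)!)`. -/
noncomputable def besselI1 (z : ℝ) : ℝ :=
  ∑' n : ℕ, (z / 2) ^ (2 * n + 1) / ((Nat.factorial n : ℝ) * (Nat.factorial (n + 1) : ℝ))

/-- `ψ(0) = 0`, `ψ(n) = Σ_{m=1}^n 1/m`. -/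
noncomputable def psiHarm (n : ℕ) : ℝ := ∑ m ∈ Finset.Icc 1 n, (1 / m : ℝ)

/-- `K₀(z) = −(ln(z/2) + C) I₀(z) + Σ_{n=1}^∞ (ψ(n)/(n!)²) (z/2)^{2n}`. -/
noncomputable def besselK0 (z : ℝ) : ℝ :=
  -(Real.log (z / 2) + Real.eulerMascheroniConstant) * besselI0 z +
    ∑' n : ℕ, psiHarm (n + 1) / (Nat.factorial (n + 1) : ℝ) ^ 2 * (z / 2) ^ (2 * (n + 1))

/-- `K₁(z) = 1/z + (ln(z/2) + C) I₁(z) − (1/2) Σ_{n=0}^∞ ((ψ(n+1)+ψ(n))/(n!(n+1)!)) (z/2)^{2n+1}`. -/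
noncomputable def besselK1 (z : ℝ) : ℝ :=
  1 / z + (Real.log (z / 2) + Real.eulerMascheroniConstant) * besselI1 z -
    (1 / 2) * ∑' n : ℕ, (psiHarm (n + 1) + psiHarm n) /
      ((Nat.factorial n : ℝ) * (Nat.factorial (n + 1) : ℝ)) * (z / 2) ^ (2 * n + 1)

/-- `β_n = κ²(n+1)/c²`. -/
noncomputable def betaC (κ c : ℝ) (n : ℕ) : ℝ := κ ^ 2 * (n + 1) / c ^ 2

/-- `γ = κ/c`. -/
noncomputable def gammaC (κ c : ℝ) : ℝ := κ / c

/-- `v_n(r) = Σ_{k=0}^{⌊n/2⌋} a_{n,2k} r^{2k}`. -/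
noncomputable def vPoly (a : ℕ → ℕ → ℝ) (n : ℕ) (r : ℝ) : ℝ :=
  ∑ k ∈ Finset.range (n / 2 + 1), a n (2 * k) * r ^ (2 * k)

/-- `w_n(r) = Σ_{k=0}^{⌊(n−1)/2⌋} a_{n,2k+1} r^{2k+1}` (so `w₀ = 0` since `a_{0,1} = 0`). -/
noncomputable def wPoly (a : ℕ → ℕ → ℝ) (n : ℕ) (r : ℝ) : ℝ :=
  ∑ k ∈ Finset.range ((n - 1) / 2 + 1), a n (2 * k + 1) * r ^ (2 * k + 1)

/-- `Φ_n(r) = K₀(γr) v_n(r) + K₁(γr) w_n(r)`. -/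
noncomputable def PhiFund (γ : ℝ) (a : ℕ → ℕ → ℝ) (n : ℕ) (r : ℝ) : ℝ :=
  besselK0 (γ * r) * vPoly a n r + besselK1 (γ * r) * wPoly a n r

/-- `ṽ_n(r) = 2 Σ_{k=1}^{⌊n/2⌋} k a_{n,2k} r^{2k−1} − γ w_n(r)`. -/
noncomputable def vTilde (γ : ℝ) (a : ℕ → ℕ → ℝ) (n : ℕ) (r : ℝ) : ℝ :=
  2 * ∑ k ∈ Finset.Icc 1 (n / 2), (k : ℝ) * a n (2 * k) * r ^ (2 * k - 1) - γ * wPoly a n r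

/-- `w̃_n(r) = 2 Σ_{k=1}^{⌊(n−1)/2⌋} k a_{n,2k+1} r^{2k} − γ v_n(r)`. -/
noncomputable def wTilde (γ : ℝ) (a : ℕ → ℕ → ℝ) (n : ℕ) (r : ℝ) : ℝ :=
  2 * ∑ k ∈ Finset.Icc 1 ((n - 1) / 2), (k : ℝ) * a n (2 * k + 1) * r ^ (2 * k) -
    γ * vPoly a n r

/-- `v̄_n(r) = 2 Σ_{k=1}^{⌊n/2⌋} k(2k−1) a_{n,2k} r^{2k−2}
  − γ Σ_{k=0}^{⌊(n−1)/2⌋} (2k+1) a_{n,2k+1} r^{2k} − γ w̃_n(r)`. -/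
noncomputable def vBar (γ : ℝ) (a : ℕ → ℕ → ℝ) (n : ℕ) (r : ℝ) : ℝ :=
  2 * ∑ k ∈ Finset.Icc 1 (n / 2), (k : ℝ) * (2 * k - 1 : ℝ) * a n (2 * k) * r ^ (2 * k - 2) -
    γ * ∑ k ∈ Finset.range ((n - 1) / 2 + 1), (2 * k + 1 : ℝ) * a n (2 * k + 1) * r ^ (2 * k) -
    γ * wTilde γ a n r

/-- `w̄_n(r) = 4 Σ_{k=1}^{⌊(n−1)/2⌋} k² a_{n,2k+1} r^{2k}
  − 2γ Σ_{k=1}^{⌊n/2⌋} k a_{n,2k} r^{2k} − γ r ṽ_n(r) − w̃_n(r)`. -/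
noncomputable def wBar (γ : ℝ) (a : ℕ → ℕ → ℝ) (n : ℕ) (r : ℝ) : ℝ :=
  4 * ∑ k ∈ Finset.Icc 1 ((n - 1) / 2), (k : ℝ) ^ 2 * a n (2 * k + 1) * r ^ (2 * k) -
    2 * γ * ∑ k ∈ Finset.Icc 1 (n / 2), (k : ℝ) * a n (2 * k) * r ^ (2 * k) -
    γ * r * vTilde γ a n r - wTilde γ a n r

lemma fact_pos' (n : ℕ) : (0:ℝ) < (Nat.factorial n : ℝ) := by
  exact_mod_cast Nat.factorial_pos n

lemma fact_one_le (n : ℕ) : (1:ℝ) ≤ (Nat.factorial n : ℝ) := by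
  exact_mod_cast Nat.one_le_iff_ne_zero.mpr (Nat.factorial_pos n).ne'

lemma psiHarm_zero : psiHarm 0 = 0 := by simp [psiHarm]

lemma psiHarm_nonneg (n : ℕ) : 0 ≤ psiHarm n := by
  apply Finset.sum_nonneg; intro m _; positivity

lemma psiHarm_le (n : ℕ) : psiHarm n ≤ n := by
  calc psiHarm n ≤ ∑ m ∈ Finset.Icc 1 n, (1:ℝ) := by
        apply Finset.sum_le_sum; intro m hm
        simp only [Finset.mem_Icc] at hm
        rw [div_le_one (by exact_mod_cast hm.1 : (0:ℝ) < m)]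
        exact_mod_cast hm.1
    _ = n := by simp [Nat.card_Icc]

lemma psiHarm_succ (n : ℕ) : psiHarm (n+1) = psiHarm n + 1/((n:ℝ)+1) := by
  unfold psiHarm
  rw [Finset.sum_Icc_succ_top (by omega)]
  push_cast; ring

lemma summable_master (y : ℝ) (hy : 0 ≤ y) :
    Summable (fun n : ℕ => ((n:ℝ)+1)^2 * y^n / (Nat.factorial n : ℝ)) := by
  apply Summable.of_nonneg_of_le (fun n => by positivity) (fun n => ?_)
    (Real.summable_pow_div_factorial (4*y))
  have h2 : ((n:ℝ)+1) ≤ 2^n := by exact_mod_cast (Nat.lt_two_pow_self (n := n))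
  have : ((n:ℝ)+1)^2 * y^n ≤ (4*y)^n := by
    calc ((n:ℝ)+1)^2 * y^n ≤ (2^n)^2 * y^n := by gcongr
      _ = (4*y)^n := by
        rw [mul_pow, ← pow_mul, mul_comm n 2, pow_mul]
        norm_num [mul_comm]
  exact div_le_div_of_nonneg_right this (fact_pos' n).le

noncomputable def tA (n : ℕ) (z : ℝ) : ℝ := (z/2)^(2*n) / (Nat.factorial n : ℝ)^2
noncomputable def dA (n : ℕ) (z : ℝ) : ℝ := (n:ℝ) * (z/2)^(2*n-1) / (Nat.factorial n : ℝ)^2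
noncomputable def tB (n : ℕ) (z : ℝ) : ℝ :=
  (z/2)^(2*n+1) / ((Nat.factorial n : ℝ) * (Nat.factorial (n+1) : ℝ))
noncomputable def dB (n : ℕ) (z : ℝ) : ℝ :=
  ((2*(n:ℝ)+1)/2) * (z/2)^(2*n) / ((Nat.factorial n : ℝ) * (Nat.factorial (n+1) : ℝ))
noncomputable def tP (n : ℕ) (z : ℝ) : ℝ := psiHarm n / (Nat.factorial n : ℝ)^2 * (z/2)^(2*n)
noncomputable def dP (n : ℕ) (z : ℝ) : ℝ :=
  psiHarm n * (n:ℝ) / (Nat.factorial n : ℝ)^2 * (z/2)^(2*n-1)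
noncomputable def tQ (n : ℕ) (z : ℝ) : ℝ :=
  (psiHarm (n+1) + psiHarm n) / ((Nat.factorial n : ℝ) * (Nat.factorial (n+1) : ℝ)) *
    (z/2)^(2*n+1)
noncomputable def dQ (n : ℕ) (z : ℝ) : ℝ :=
  (psiHarm (n+1) + psiHarm n) * ((2*(n:ℝ)+1)/2) /
    ((Nat.factorial n : ℝ) * (Nat.factorial (n+1) : ℝ)) * (z/2)^(2*n)

lemma hasDerivAt_half (z : ℝ) : HasDerivAt (fun z : ℝ => z/2) (1/2) z := by
  simpa using (hasDerivAt_id z).div_const 2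

lemma hasDerivAt_tA (n : ℕ) (z : ℝ) : HasDerivAt (fun z => tA n z) (dA n z) z := by
  have h := ((hasDerivAt_half z).pow (2*n)).div_const ((Nat.factorial n : ℝ)^2)
  refine h.congr_deriv ?_
  unfold dA; push_cast; ring

lemma hasDerivAt_tB (n : ℕ) (z : ℝ) : HasDerivAt (fun z => tB n z) (dB n z) z := by
  have h := ((hasDerivAt_half z).pow (2*n+1)).div_const
    ((Nat.factorial n : ℝ) * (Nat.factorial (n+1) : ℝ))
  refine h.congr_deriv ?_
  unfold dB; simp only [Nat.add_sub_cancel]; push_cast; ring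

lemma hasDerivAt_tP (n : ℕ) (z : ℝ) : HasDerivAt (fun z => tP n z) (dP n z) z := by
  have h := ((hasDerivAt_half z).pow (2*n)).const_mul (psiHarm n / (Nat.factorial n : ℝ)^2)
  refine h.congr_deriv ?_
  unfold dP; push_cast; ring

lemma hasDerivAt_tQ (n : ℕ) (z : ℝ) : HasDerivAt (fun z => tQ n z) (dQ n z) z := by
  have h := ((hasDerivAt_half z).pow (2*n+1)).const_mul
    ((psiHarm (n+1) + psiHarm n) / ((Nat.factorial n : ℝ) * (Nat.factorial (n+1) : ℝ)))
  refine h.congr_deriv ?_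
  unfold dQ; simp only [Nat.add_sub_cancel]; push_cast; ring

lemma pow_half_le {x R : ℝ} (hx : 0 ≤ x) (hxR : x ≤ R) {m n : ℕ} (hm : m ≤ 2*(n+1)) :
    (x/2)^m ≤ ((max 1 (R/2))^2)^(n+1) := by
  have ht : (1:ℝ) ≤ max 1 (R/2) := le_max_left _ _
  calc (x/2)^m ≤ (max 1 (R/2))^m := by
        apply pow_le_pow_left₀ (by linarith)
        exact le_trans (by linarith) (le_max_right _ _)
    _ ≤ (max 1 (R/2))^(2*(n+1)) := pow_le_pow_right₀ ht hm
    _ = ((max 1 (R/2))^2)^(n+1) := by rw [← pow_mul]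

lemma gen_le {C D c : ℝ} (y : ℝ) (n : ℕ) (hy : 1 ≤ y) (hC : 0 ≤ C)
    (hD : (Nat.factorial n : ℝ) ≤ D) (hc : 0 ≤ c)
    (hCc : C ≤ c * ((n:ℝ)+1)^2) :
    C * y^(n+1) / D ≤ (c*y) * (((n:ℝ)+1)^2 * y^n / (Nat.factorial n : ℝ)) := by
  have hD0 : (0:ℝ) < D := lt_of_lt_of_le (fact_pos' n) hD
  have h1 : C * y^(n+1)/D ≤ (c * ((n:ℝ)+1)^2) * y^(n+1) / (Nat.factorial n : ℝ) := by
    exact div_le_div₀ (by positivity) (mul_le_mul_of_nonneg_right hCc (by positivity)) (fact_pos' n) hD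
  calc C * y^(n+1)/D ≤ (c * ((n:ℝ)+1)^2) * y^(n+1) / (Nat.factorial n : ℝ) := h1
    _ = (c*y) * (((n:ℝ)+1)^2 * y^n / (Nat.factorial n : ℝ)) := by rw [pow_succ]; ring

lemma nonneg_tA {x : ℝ} (hx : 0 ≤ x) (n : ℕ) : 0 ≤ tA n x := by
  unfold tA; positivity
lemma nonneg_dA {x : ℝ} (hx : 0 ≤ x) (n : ℕ) : 0 ≤ dA n x := by
  unfold dA; positivity
lemma nonneg_tB {x : ℝ} (hx : 0 ≤ x) (n : ℕ) : 0 ≤ tB n x := by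
  unfold tB; positivity
lemma nonneg_dB {x : ℝ} (hx : 0 ≤ x) (n : ℕ) : 0 ≤ dB n x := by
  unfold dB; positivity
lemma nonneg_tP {x : ℝ} (hx : 0 ≤ x) (n : ℕ) : 0 ≤ tP n x := by
  unfold tP
  have h := psiHarm_nonneg n
  have h2 := fact_pos' n
  have h3 : (0:ℝ) ≤ (x/2)^(2*n) := by positivity
  positivity
lemma nonneg_dP {x : ℝ} (hx : 0 ≤ x) (n : ℕ) : 0 ≤ dP n x := by
  unfold dP
  have h := psiHarm_nonneg n
  positivity
lemma nonneg_tQ {x : ℝ} (hx : 0 ≤ x) (n : ℕ) : 0 ≤ tQ n x := by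
  unfold tQ
  have h := psiHarm_nonneg n
  have h' := psiHarm_nonneg (n+1)
  positivity
lemma nonneg_dQ {x : ℝ} (hx : 0 ≤ x) (n : ℕ) : 0 ≤ dQ n x := by
  unfold dQ
  have h := psiHarm_nonneg n
  have h' := psiHarm_nonneg (n+1)
  positivity

section bounds
variable {x R : ℝ}

lemma one_le_y (R : ℝ) : (1:ℝ) ≤ (max 1 (R/2))^2 := by
  have ht : (1:ℝ) ≤ max 1 (R/2) := le_max_left _ _
  nlinarith

lemma bound_tA (hx : 0 ≤ x) (hxR : x ≤ R) (n : ℕ) :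
    tA n x ≤ (1*(max 1 (R/2))^2) *
      (((n:ℝ)+1)^2 * ((max 1 (R/2))^2)^n / (Nat.factorial n : ℝ)) := by
  have hn : (0:ℝ) ≤ n := n.cast_nonneg
  calc tA n x ≤ 1 * ((max 1 (R/2))^2)^(n+1) / ((Nat.factorial n:ℝ)^2) := by
        unfold tA; rw [one_mul]
        gcongr
        exact pow_half_le hx hxR (by omega)
    _ ≤ _ := gen_le _ n (one_le_y R) zero_le_one
        (le_self_pow₀ (fact_one_le n) two_ne_zero) zero_le_one (by nlinarith)

lemma bound_dA (hx : 0 ≤ x) (hxR : x ≤ R) (n : ℕ) :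
    dA n x ≤ (1*(max 1 (R/2))^2) *
      (((n:ℝ)+1)^2 * ((max 1 (R/2))^2)^n / (Nat.factorial n : ℝ)) := by
  have hn : (0:ℝ) ≤ n := n.cast_nonneg
  calc dA n x ≤ (n:ℝ) * ((max 1 (R/2))^2)^(n+1) / ((Nat.factorial n:ℝ)^2) := by
        unfold dA
        gcongr
        exact pow_half_le hx hxR (by omega)
    _ ≤ _ := gen_le _ n (one_le_y R) hn
        (le_self_pow₀ (fact_one_le n) two_ne_zero) zero_le_one (by nlinarith)

lemma bound_tB (hx : 0 ≤ x) (hxR : x ≤ R) (n : ℕ) :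
    tB n x ≤ (1*(max 1 (R/2))^2) *
      (((n:ℝ)+1)^2 * ((max 1 (R/2))^2)^n / (Nat.factorial n : ℝ)) := by
  have hn : (0:ℝ) ≤ n := n.cast_nonneg
  have hD : (Nat.factorial n : ℝ) ≤ (Nat.factorial n : ℝ) * (Nat.factorial (n+1) : ℝ) :=
    le_mul_of_one_le_right (fact_pos' n).le (fact_one_le (n+1))
  calc tB n x ≤ 1 * ((max 1 (R/2))^2)^(n+1) /
        ((Nat.factorial n : ℝ) * (Nat.factorial (n+1) : ℝ)) := by
        unfold tB; rw [one_mul]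
        gcongr
        exact pow_half_le hx hxR (by omega)
    _ ≤ _ := gen_le _ n (one_le_y R) zero_le_one hD zero_le_one (by nlinarith)

lemma bound_dB (hx : 0 ≤ x) (hxR : x ≤ R) (n : ℕ) :
    dB n x ≤ (1*(max 1 (R/2))^2) *
      (((n:ℝ)+1)^2 * ((max 1 (R/2))^2)^n / (Nat.factorial n : ℝ)) := by
  have hn : (0:ℝ) ≤ n := n.cast_nonneg
  have hD : (Nat.factorial n : ℝ) ≤ (Nat.factorial n : ℝ) * (Nat.factorial (n+1) : ℝ) :=
    le_mul_of_one_le_right (fact_pos' n).le (fact_one_le (n+1))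
  calc dB n x ≤ ((2*(n:ℝ)+1)/2) * ((max 1 (R/2))^2)^(n+1) /
        ((Nat.factorial n : ℝ) * (Nat.factorial (n+1) : ℝ)) := by
        unfold dB
        gcongr
        exact pow_half_le hx hxR (by omega)
    _ ≤ _ := gen_le _ n (one_le_y R) (by positivity) hD zero_le_one (by nlinarith)

lemma bound_tP (hx : 0 ≤ x) (hxR : x ≤ R) (n : ℕ) :
    tP n x ≤ (1*(max 1 (R/2))^2) *
      (((n:ℝ)+1)^2 * ((max 1 (R/2))^2)^n / (Nat.factorial n : ℝ)) := by
  have hn : (0:ℝ) ≤ n := n.cast_nonneg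
  have hψ := psiHarm_nonneg n
  have hψl := psiHarm_le n
  calc tP n x ≤ psiHarm n * ((max 1 (R/2))^2)^(n+1) / ((Nat.factorial n:ℝ)^2) := by
        unfold tP; rw [div_mul_eq_mul_div]
        gcongr
        exact pow_half_le hx hxR (by omega)
    _ ≤ _ := gen_le _ n (one_le_y R) hψ
        (le_self_pow₀ (fact_one_le n) two_ne_zero) zero_le_one (by nlinarith)

lemma bound_dP (hx : 0 ≤ x) (hxR : x ≤ R) (n : ℕ) :
    dP n x ≤ (1*(max 1 (R/2))^2) *
      (((n:ℝ)+1)^2 * ((max 1 (R/2))^2)^n / (Nat.factorial n : ℝ)) := by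
  have hn : (0:ℝ) ≤ n := n.cast_nonneg
  have hψ := psiHarm_nonneg n
  have hψl := psiHarm_le n
  calc dP n x ≤ (psiHarm n * (n:ℝ)) * ((max 1 (R/2))^2)^(n+1) /
        ((Nat.factorial n:ℝ)^2) := by
        unfold dP; rw [div_mul_eq_mul_div]
        gcongr
        exact pow_half_le hx hxR (by omega)
    _ ≤ _ := gen_le _ n (one_le_y R) (by positivity)
        (le_self_pow₀ (fact_one_le n) two_ne_zero) zero_le_one (by nlinarith)

lemma bound_tQ (hx : 0 ≤ x) (hxR : x ≤ R) (n : ℕ) :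
    tQ n x ≤ (2*(max 1 (R/2))^2) *
      (((n:ℝ)+1)^2 * ((max 1 (R/2))^2)^n / (Nat.factorial n : ℝ)) := by
  have hn : (0:ℝ) ≤ n := n.cast_nonneg
  have hψ := psiHarm_nonneg n
  have hψ' := psiHarm_nonneg (n+1)
  have hψl := psiHarm_le n
  have hψl' := psiHarm_le (n+1)
  push_cast at hψl'
  have hD : (Nat.factorial n : ℝ) ≤ (Nat.factorial n : ℝ) * (Nat.factorial (n+1) : ℝ) :=
    le_mul_of_one_le_right (fact_pos' n).le (fact_one_le (n+1))
  calc tQ n x ≤ (psiHarm (n+1) + psiHarm n) * ((max 1 (R/2))^2)^(n+1) /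
        ((Nat.factorial n : ℝ) * (Nat.factorial (n+1) : ℝ)) := by
        unfold tQ; rw [div_mul_eq_mul_div]
        gcongr
        exact pow_half_le hx hxR (by omega)
    _ ≤ _ := gen_le _ n (one_le_y R) (by positivity) hD (by norm_num) (by nlinarith)

lemma bound_dQ (hx : 0 ≤ x) (hxR : x ≤ R) (n : ℕ) :
    dQ n x ≤ (2*(max 1 (R/2))^2) *
      (((n:ℝ)+1)^2 * ((max 1 (R/2))^2)^n / (Nat.factorial n : ℝ)) := by
  have hn : (0:ℝ) ≤ n := n.cast_nonneg
  have hψ := psiHarm_nonneg n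
  have hψ' := psiHarm_nonneg (n+1)
  have hψl := psiHarm_le n
  have hψl' := psiHarm_le (n+1)
  push_cast at hψl'
  have hD : (Nat.factorial n : ℝ) ≤ (Nat.factorial n : ℝ) * (Nat.factorial (n+1) : ℝ) :=
    le_mul_of_one_le_right (fact_pos' n).le (fact_one_le (n+1))
  calc dQ n x ≤ ((psiHarm (n+1) + psiHarm n) * ((2*(n:ℝ)+1)/2)) * ((max 1 (R/2))^2)^(n+1) /
        ((Nat.factorial n : ℝ) * (Nat.factorial (n+1) : ℝ)) := by
        unfold dQ; rw [div_mul_eq_mul_div]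
        gcongr
        exact pow_half_le hx hxR (by omega)
    _ ≤ _ := gen_le _ n (one_le_y R) (by positivity) hD (by norm_num) (by nlinarith)

end bounds

lemma summable_of_bounds {f : ℕ → ℝ} (c y : ℝ) (hy : 0 ≤ y) (h0 : ∀ n, 0 ≤ f n)
    (h : ∀ n, f n ≤ c * (((n:ℝ)+1)^2 * y^n / (Nat.factorial n : ℝ))) : Summable f :=
  Summable.of_nonneg_of_le h0 h ((summable_master y hy).mul_left c)

lemma summable_tA {x : ℝ} (hx : 0 ≤ x) : Summable (fun n => tA n x) :=
  summable_of_bounds _ _ (by positivity) (nonneg_tA hx) (fun n => bound_tA hx le_rfl n)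
lemma summable_dA {x : ℝ} (hx : 0 ≤ x) : Summable (fun n => dA n x) :=
  summable_of_bounds _ _ (by positivity) (nonneg_dA hx) (fun n => bound_dA hx le_rfl n)
lemma summable_tB {x : ℝ} (hx : 0 ≤ x) : Summable (fun n => tB n x) :=
  summable_of_bounds _ _ (by positivity) (nonneg_tB hx) (fun n => bound_tB hx le_rfl n)
lemma summable_dB {x : ℝ} (hx : 0 ≤ x) : Summable (fun n => dB n x) :=
  summable_of_bounds _ _ (by positivity) (nonneg_dB hx) (fun n => bound_dB hx le_rfl n)
lemma summable_tP {x : ℝ} (hx : 0 ≤ x) : Summable (fun n => tP n x) :=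
  summable_of_bounds _ _ (by positivity) (nonneg_tP hx) (fun n => bound_tP hx le_rfl n)
lemma summable_dP {x : ℝ} (hx : 0 ≤ x) : Summable (fun n => dP n x) :=
  summable_of_bounds _ _ (by positivity) (nonneg_dP hx) (fun n => bound_dP hx le_rfl n)
lemma summable_tQ {x : ℝ} (hx : 0 ≤ x) : Summable (fun n => tQ n x) :=
  summable_of_bounds _ _ (by positivity) (nonneg_tQ hx) (fun n => bound_tQ hx le_rfl n)
lemma summable_dQ {x : ℝ} (hx : 0 ≤ x) : Summable (fun n => dQ n x) :=
  summable_of_bounds _ _ (by positivity) (nonneg_dQ hx) (fun n => bound_dQ hx le_rfl n)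

lemma hasDerivAt_tsum_gen (T D : ℕ → ℝ → ℝ) (c : ℝ)
    (hTd : ∀ (n : ℕ) (x : ℝ), HasDerivAt (fun z => T n z) (D n x) x)
    (hD0 : ∀ (n : ℕ) {x : ℝ}, 0 ≤ x → 0 ≤ D n x)
    (hDb : ∀ {x R : ℝ}, 0 ≤ x → x ≤ R → ∀ n : ℕ, D n x ≤ (c*(max 1 (R/2))^2) *
      (((n:ℝ)+1)^2 * ((max 1 (R/2))^2)^n / (Nat.factorial n : ℝ)))
    (hT0 : ∀ {x : ℝ}, 0 ≤ x → Summable (fun n => T n x))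
    {z : ℝ} (hz : 0 < z) (hc : 0 ≤ c) :
    HasDerivAt (fun z => ∑' n, T n z) (∑' n, D n z) z := by
  have hmem : z ∈ Set.Ioo (0:ℝ) (z+1) := ⟨hz, by linarith⟩
  exact hasDerivAt_tsum_of_isPreconnected
    (((summable_master ((max 1 ((z+1)/2))^2) (by positivity)).mul_left
      (c*(max 1 ((z+1)/2))^2)))
    isOpen_Ioo isPreconnected_Ioo
    (fun n y _ => hTd n y)
    (fun n y hy => by
      rw [Real.norm_eq_abs, abs_of_nonneg (hD0 n hy.1.le)]
      exact hDb hy.1.le hy.2.le n)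
    hmem (hT0 hz.le) hmem

lemma hasDerivAt_sumA {z : ℝ} (hz : 0 < z) :
    HasDerivAt (fun z => ∑' n, tA n z) (∑' n, dA n z) z :=
  hasDerivAt_tsum_gen tA dA 1 hasDerivAt_tA (fun n {_} hx => nonneg_dA hx n)
    (fun {_ _} hx hxR n => bound_dA hx hxR n) (fun {_} hx => summable_tA hx) hz zero_le_one

lemma hasDerivAt_sumB {z : ℝ} (hz : 0 < z) :
    HasDerivAt (fun z => ∑' n, tB n z) (∑' n, dB n z) z :=
  hasDerivAt_tsum_gen tB dB 1 hasDerivAt_tB (fun n {_} hx => nonneg_dB hx n)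
    (fun {_ _} hx hxR n => bound_dB hx hxR n) (fun {_} hx => summable_tB hx) hz zero_le_one

lemma hasDerivAt_sumP {z : ℝ} (hz : 0 < z) :
    HasDerivAt (fun z => ∑' n, tP n z) (∑' n, dP n z) z :=
  hasDerivAt_tsum_gen tP dP 1 hasDerivAt_tP (fun n {_} hx => nonneg_dP hx n)
    (fun {_ _} hx hxR n => bound_dP hx hxR n) (fun {_} hx => summable_tP hx) hz zero_le_one

lemma hasDerivAt_sumQ {z : ℝ} (hz : 0 < z) :
    HasDerivAt (fun z => ∑' n, tQ n z) (∑' n, dQ n z) z :=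
  hasDerivAt_tsum_gen tQ dQ 2 hasDerivAt_tQ (fun n {_} hx => nonneg_dQ hx n)
    (fun {_ _} hx hxR n => bound_dQ hx hxR n) (fun {_} hx => summable_tQ hx) hz (by norm_num)

lemma besselI0_eq (z : ℝ) : besselI0 z = ∑' n, tA n z := rfl
lemma besselI1_eq (z : ℝ) : besselI1 z = ∑' n, tB n z := rfl

lemma tA_zero (z : ℝ) : tA 0 z = 1 := by
  unfold tA; norm_num
lemma tP_zero (z : ℝ) : tP 0 z = 0 := by
  unfold tP; rw [psiHarm_zero]; norm_num

lemma dA_succ (n : ℕ) (z : ℝ) : dA (n+1) z = tB n z := by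
  unfold dA tB
  have he : 2*(n+1)-1 = 2*n+1 := by omega
  rw [he, Nat.factorial_succ]
  have h1 := fact_pos' n
  push_cast
  field_simp

lemma sum_dA {z : ℝ} (hz : 0 ≤ z) : ∑' n, dA n z = besselI1 z := by
  rw [Summable.tsum_eq_zero_add (summable_dA hz)]
  have h0 : dA 0 z = 0 := by unfold dA; norm_num
  rw [h0, zero_add, tsum_congr (fun n => dA_succ n z)]
  rfl

lemma dB_eq (n : ℕ) {z : ℝ} (hz : z ≠ 0) : dB n z = tA n z - 1/z * tB n z := by
  unfold dB tA tB
  rw [Nat.factorial_succ, pow_succ]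
  have h1 := (fact_pos' n).ne'
  push_cast
  field_simp
  ring

lemma sum_dB {z : ℝ} (hz : 0 < z) : ∑' n, dB n z = besselI0 z - besselI1 z / z := by
  rw [tsum_congr (fun n => dB_eq n hz.ne'),
    Summable.tsum_sub (summable_tA hz.le) ((summable_tB hz.le).mul_left (1/z)),
    tsum_mul_left, one_div_mul_eq_div]
  rfl

lemma sum_tA_succ {z : ℝ} (hz : 0 ≤ z) : ∑' n, tA (n+1) z = besselI0 z - 1 := by
  have h := Summable.tsum_eq_zero_add (summable_tA hz)
  rw [besselI0_eq, h, tA_zero]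
  ring

lemma sum_tP_shift {z : ℝ} (hz : 0 ≤ z) : ∑' n, tP n z = ∑' n, tP (n+1) z := by
  rw [Summable.tsum_eq_zero_add (summable_tP hz), tP_zero, zero_add]

lemma dP_succ_eq (n : ℕ) {z : ℝ} (hz : z ≠ 0) :
    dP (n+1) z = 1/z * tA (n+1) z + 1/2 * tQ n z := by
  unfold dP tA tQ
  rw [psiHarm_succ]
  have he : 2*(n+1)-1 = 2*n+1 := by omega
  have he2 : 2*(n+1) = (2*n+1)+1 := by omega
  rw [he, he2, pow_succ, Nat.factorial_succ]
  have h1 := (fact_pos' n).ne'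
  have h2 : ((n:ℝ)+1) ≠ 0 := by positivity
  push_cast
  field_simp
  ring

lemma sum_dP {z : ℝ} (hz : 0 < z) :
    ∑' n, dP n z = 1/z * (besselI0 z - 1) + 1/2 * ∑' n, tQ n z := by
  rw [Summable.tsum_eq_zero_add (summable_dP hz.le)]
  have h0 : dP 0 z = 0 := by unfold dP; norm_num
  rw [h0, zero_add, tsum_congr (fun n => dP_succ_eq n hz.ne'),
    Summable.tsum_add (((summable_nat_add_iff 1).mpr (summable_tA hz.le)).mul_left (1/z))
      ((summable_tQ hz.le).mul_left (1/2)),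
    tsum_mul_left, tsum_mul_left, sum_tA_succ hz.le]

lemma dQ_eq (n : ℕ) {z : ℝ} (hz : z ≠ 0) :
    dQ n z = 2 * (1/z * tB n z + tP n z - 1/(2*z) * tQ n z) := by
  unfold dQ tB tP tQ
  rw [psiHarm_succ, Nat.factorial_succ, pow_succ]
  have h1 := (fact_pos' n).ne'
  have h2 : ((n:ℝ)+1) ≠ 0 := by positivity
  push_cast
  field_simp
  ring

lemma sum_dQ {z : ℝ} (hz : 0 < z) :
    ∑' n, dQ n z =
      2 * (1/z * besselI1 z + (∑' n, tP (n+1) z) - 1/(2*z) * ∑' n, tQ n z) := by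
  rw [tsum_congr (fun n => dQ_eq n hz.ne'), tsum_mul_left,
    Summable.tsum_sub
      (Summable.add ((summable_tB hz.le).mul_left (1/z)) (summable_tP hz.le))
      ((summable_tQ hz.le).mul_left (1/(2*z))),
    Summable.tsum_add ((summable_tB hz.le).mul_left (1/z)) (summable_tP hz.le),
    tsum_mul_left, tsum_mul_left, sum_tP_shift hz.le]
  rfl

lemma besselK0_eq' (z : ℝ) : besselK0 z =
    -(Real.log (z / 2) + Real.eulerMascheroniConstant) * besselI0 z +
      ∑' n : ℕ, tP (n+1) z := rfl
lemma besselK1_eq' (z : ℝ) : besselK1 z =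
    1 / z + (Real.log (z / 2) + Real.eulerMascheroniConstant) * besselI1 z -
      (1/2) * ∑' n : ℕ, tQ n z := rfl

lemma hasDerivAt_L {z : ℝ} (hz : 0 < z) :
    HasDerivAt (fun z => Real.log (z/2) + Real.eulerMascheroniConstant) (1/z) z := by
  have h1 : HasDerivAt (fun z : ℝ => z/2) (1/2) z := hasDerivAt_half z
  have h2 := (Real.hasDerivAt_log (div_pos hz two_pos).ne').comp z h1
  have h3 := h2.add_const Real.eulerMascheroniConstant
  refine h3.congr_deriv ?_
  field_simp

lemma hasDerivAt_besselK0 {z : ℝ} (hz : 0 < z) :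
    HasDerivAt besselK0 (-besselK1 z) z := by
  have hL := hasDerivAt_L hz
  have hA := hasDerivAt_sumA hz
  have hPshift : HasDerivAt (fun z => ∑' n, tP (n+1) z) (∑' n, dP n z) z := by
    apply (hasDerivAt_sumP hz).congr_of_eventuallyEq
    filter_upwards [eventually_gt_nhds hz] with x hx
    exact (sum_tP_shift hx.le).symm
  have H := ((hL.mul hA).neg).add hPshift
  have hfun : besselK0 = fun z =>
      -((Real.log (z/2) + Real.eulerMascheroniConstant) * ∑' n, tA n z) +
        ∑' n, tP (n+1) z := by
    funext x
    rw [besselK0_eq', ← besselI0_eq, neg_mul]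
  rw [hfun]
  refine H.congr_deriv ?_
  rw [sum_dA hz.le, sum_dP hz, ← besselI0_eq, besselK1_eq']
  ring

lemma hasDerivAt_besselK1 {z : ℝ} (hz : 0 < z) :
    HasDerivAt besselK1 (-besselK0 z - besselK1 z / z) z := by
  have hL := hasDerivAt_L hz
  have hB := hasDerivAt_sumB hz
  have hQ := hasDerivAt_sumQ hz
  have hinv : HasDerivAt (fun z : ℝ => 1/z) (-(1/z^2)) z := by
    have h := hasDerivAt_inv hz.ne'
    have heq : (fun z : ℝ => 1/z) = fun z : ℝ => z⁻¹ := by funext x; rw [one_div]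
    rw [heq]
    refine h.congr_deriv ?_
    rw [one_div]
  have H := (hinv.add (hL.mul hB)).sub (hQ.const_mul (1/2))
  have hfun : besselK1 = fun z =>
      1/z + (Real.log (z/2) + Real.eulerMascheroniConstant) * (∑' n, tB n z) -
        1/2 * ∑' n, tQ n z := by
    funext x
    rw [besselK1_eq', ← besselI1_eq]
  have H' := H.congr_of_eventuallyEq (by rw [hfun]; exact Filter.EventuallyEq.refl _ _ : besselK1 =ᶠ[nhds z] _)
  refine H'.congr_deriv ?_
  rw [sum_dB hz, sum_dQ hz, ← besselI1_eq, besselK0_eq', besselK1_eq']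
  have hz' := hz.ne'
  field_simp
  ring

theorem stmt13 (γ : ℝ) (hγ0 : 0 < γ) (a : ℕ → ℕ → ℝ) (n : ℕ) :
    ∀ r : ℝ, 0 < r →
      HasDerivAt (PhiFund γ a n)
        (besselK0 (γ * r) * vTilde γ a n r +
          besselK1 (γ * r) * wTilde γ a n r) r := by
  intro r hr
  have hu : 0 < γ * r := mul_pos hγ0 hr
  have hlin : HasDerivAt (fun x : ℝ => γ * x) γ r := by
    simpa using (hasDerivAt_id r).const_mul γ
  have hK0 : HasDerivAt (fun r => besselK0 (γ * r)) (-besselK1 (γ*r) * γ) r :=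
    (hasDerivAt_besselK0 hu).comp r hlin
  have hK1 : HasDerivAt (fun r => besselK1 (γ * r))
      ((-besselK0 (γ*r) - besselK1 (γ*r)/(γ*r)) * γ) r :=
    (hasDerivAt_besselK1 hu).comp r hlin
  have hv : HasDerivAt (fun r => vPoly a n r)
      (∑ k ∈ Finset.range (n/2+1), a n (2*k) * ((2*k : ℕ) * r^(2*k-1))) r := by
    apply HasDerivAt.fun_sum
    intro k _
    exact (hasDerivAt_pow (2*k) r).const_mul (a n (2*k))
  have hw : HasDerivAt (fun r => wPoly a n r)
      (∑ k ∈ Finset.range ((n-1)/2+1), a n (2*k+1) * ((2*k+1 : ℕ) * r^(2*k+1-1))) r := by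
    apply HasDerivAt.fun_sum
    intro k _
    exact (hasDerivAt_pow (2*k+1) r).const_mul (a n (2*k+1))
  -- rewrite the poly derivatives
  have hDv : (∑ k ∈ Finset.range (n/2+1), a n (2*k) * ((2*k : ℕ) * r^(2*k-1)))
      = 2 * ∑ k ∈ Finset.Icc 1 (n / 2), (k : ℝ) * a n (2 * k) * r ^ (2 * k - 1) := by
    rw [Finset.sum_range_succ', Finset.mul_sum, ← Finset.Ico_add_one_right_eq_Icc, Finset.sum_Ico_eq_sum_range]
    simp only [Nat.add_sub_cancel, Nat.mul_zero, Nat.cast_zero, zero_mul, mul_zero, add_zero]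
    apply Finset.sum_congr rfl
    intro i _
    rw [Nat.add_comm 1 i]
    push_cast
    ring
  have hwr : wPoly a n r / r
      = ∑ k ∈ Finset.range ((n-1)/2+1), a n (2*k+1) * r^(2*k) := by
    unfold wPoly
    rw [Finset.sum_div]
    apply Finset.sum_congr rfl
    intro k _
    rw [pow_succ, ← mul_assoc, mul_div_assoc, div_self hr.ne', mul_one]
  have hDw : (∑ k ∈ Finset.range ((n-1)/2+1), a n (2*k+1) * ((2*k+1 : ℕ) * r^(2*k+1-1)))
      = 2 * (∑ k ∈ Finset.Icc 1 ((n - 1) / 2), (k : ℝ) * a n (2 * k + 1) * r ^ (2 * k))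
        + wPoly a n r / r := by
    rw [hwr, ← sub_eq_iff_eq_add, ← Finset.sum_sub_distrib]
    simp only [Nat.add_sub_cancel]
    rw [Finset.mul_sum, ← Finset.Ico_add_one_right_eq_Icc, Finset.sum_Ico_eq_sum_range]
    rw [Finset.sum_range_succ']
    have h0 : a n (2*0+1) * ((2*0+1 : ℕ) * r^(2*0)) - a n (2*0+1) * r^(2*0) = 0 := by
      norm_num
    rw [h0, add_zero]
    apply Finset.sum_congr rfl
    intro i _
    rw [Nat.add_comm 1 i]
    push_cast
    ring
  have H := (hK0.mul hv).add (hK1.mul hw)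
  have hfun : PhiFund γ a n = fun r =>
      besselK0 (γ * r) * vPoly a n r + besselK1 (γ * r) * wPoly a n r := rfl
  rw [hfun]
  refine H.congr_deriv ?_
  rw [hDv, hDw]
  unfold vTilde wTilde
  field_simp
  ring

/-- For every `n ≥ 0`, `Φ_n` is differentiable on `(0,∞)` and
`Φ_n′(r) = K₀(γr) ṽ_n(r) + K₁(γr) w̃_n(r)` for all `r > 0`. -/
theorem stmt_13
    (κ c : ℝ) (hκ : 0 < κ) (hc : 0 < c) (a : ℕ → ℕ → ℝ)
    (ha0 : ∀ n : ℕ, a n 0 = 1)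
    (hann : ∀ n : ℕ, 1 ≤ n →
      a n n = -(betaC κ c 1 * a (n - 1) (n - 1)) / (2 * gammaC κ c * n))
    (hrec : ∀ n k : ℕ, 1 ≤ k → k ≤ n - 1 →
      a n k = (1 / (2 * gammaC κ c * k)) *
        (4 * (((k + 1) / 2 : ℕ) : ℝ) ^ 2 * a n (k + 1) -
          ∑ m ∈ Finset.Icc (k - 1) (n - 1), betaC κ c (n - m) * a m (k - 1)))
    (hzero : ∀ n k : ℕ, n < k → a n k = 0)
    (n : ℕ) :
    ∀ r : ℝ, 0 < r →
      HasDerivAt (PhiFund (gammaC κ c) a n)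
        (besselK0 (gammaC κ c * r) * vTilde (gammaC κ c) a n r +
          besselK1 (gammaC κ c * r) * wTilde (gammaC κ c) a n r) r :=
  stmt13 (gammaC κ c) (div_pos hκ hc) a n
end
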